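/- Let q be a complex number with q ∉ {0, 1, -1}. Then every invertible 2×2 complex matrix M with tr(Mᵀ · M⁻¹) = -(q + q⁻¹) is congruent to the standard solution S = [[0, 1], [-q, 0]]. -/

import Mathlib

open Matrix

/-- Matrix congruence: `A ≡_c B` iff `A = Pᵀ * B * P` for some invertible `P`. -/
def MatCongruent {n : ℕ} (A B : Matrix (Fin n) (Fin n) ℂ) : Prop :=
  ∃ P : Matrix (Fin n) (Fin n) ℂ, IsUnit P ∧ A = Pᵀ * B * P

lemma congr_aux (q : ℂ) (M : Matrix (Fin 2) (Fin 2) ℂ) (p r s t : ℂ)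
    (h00 : M 0 0 = (1-q)*(p*s)) (h01 : M 0 1 = p*t - q*(r*s))
    (h10 : M 1 0 = r*s - q*(p*t)) (h11 : M 1 1 = (1-q)*(r*t))
    (hdet : p*t - r*s ≠ 0) : MatCongruent M !![0, 1; -q, 0] := by
  refine ⟨!![p, r; s, t], ?_, ?_⟩
  · rw [Matrix.isUnit_iff_isUnit_det, Matrix.det_fin_two_of]
    exact isUnit_iff_ne_zero.mpr hdet
  · have hT : (!![p, r; s, t])ᵀ = !![p, s; r, t] := by
      ext i j; fin_cases i <;> fin_cases j <;> rfl
    rw [hT]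
    ext i j
    fin_cases i <;> fin_cases j <;>
      simp [Matrix.mul_apply, Fin.sum_univ_two, h00, h01, h10, h11] <;> ring

/-- For `q ∉ {0, 1, -1}`, every invertible `2×2` complex matrix `M` with
`tr(Mᵀ * M⁻¹) = -(q + q⁻¹)` is congruent to the standard solution `[[0,1],[-q,0]]`. -/
theorem solution_congruent_standard (q : ℂ) (hq0 : q ≠ 0) (hq1 : q ≠ 1) (hqm1 : q ≠ -1)
    (M : Matrix (Fin 2) (Fin 2) ℂ) (hM : IsUnit M)
    (htr : (Mᵀ * M⁻¹).trace = -(q + q⁻¹)) :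
    MatCongruent M !![0, 1; -q, 0] := by
  obtain ⟨a, ha⟩ : ∃ a, M 0 0 = a := ⟨_, rfl⟩
  obtain ⟨b, hb⟩ : ∃ b, M 0 1 = b := ⟨_, rfl⟩
  obtain ⟨c, hc⟩ : ∃ c, M 1 0 = c := ⟨_, rfl⟩
  obtain ⟨d, hdd⟩ : ∃ d, M 1 1 = d := ⟨_, rfl⟩
  have hD : M.det ≠ 0 := fun h => (hM.map (Matrix.detMonoidHom)).ne_zero h
  have hdet : M.det = a * d - b * c := by rw [Matrix.det_fin_two M, ha, hb, hc, hdd]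
  have hD' : a * d - b * c ≠ 0 := hdet ▸ hD
  have hinv : M⁻¹ = (M.det)⁻¹ • !![d, -b; -c, a] := by
    rw [Matrix.inv_def, Matrix.adjugate_fin_two, Ring.inverse_eq_inv', ha, hb, hc, hdd]
  rw [hinv, hdet] at htr
  simp only [Matrix.trace_fin_two, Matrix.mul_apply, Fin.sum_univ_two, Matrix.smul_apply,
    Matrix.transpose_apply, smul_eq_mul] at htr
  norm_num [Matrix.cons_val_zero, Matrix.cons_val_one, ha, hb, hc, hdd] at htr
  field_simp at htr
  have E : q * (2*a*d - b^2 - c^2) = -(q^2+1) * (a*d - b*c) := by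
    have key : (q*(2*a*d - b^2 - c^2) + (q^2+1)*(a*d - b*c))
        * ((a*d - b*c) * (a*d - b*c)) = 0 := by
      linear_combination ((a*d - b*c) * (a*d - b*c)) * htr
    rcases mul_eq_zero.mp key with h | h
    · linear_combination h
    · exact absurd h (mul_ne_zero hD' hD')
  have h1q : (1:ℂ) - q ≠ 0 := fun h => hq1 (by linear_combination -h)
  have h1pq : (1:ℂ) + q ≠ 0 := fun h => hqm1 (by linear_combination h)
  have h1q2 : (1:ℂ) - q^2 ≠ 0 := by
    intro h; exact absurd (by linear_combination h : (1-q)*(1+q) = 0) (mul_ne_zero h1q h1pq)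
  have hbc : b - c ≠ 0 := by
    intro h
    have hb' : b = c := by linear_combination h
    have h0 : ((q+1)^2) * (a*d - b*c) = 0 := by
      rw [hb'] at E ⊢
      linear_combination E
    rcases mul_eq_zero.mp h0 with h2 | h2
    · exact hqm1 (by have := pow_eq_zero_iff (n := 2) (by norm_num) |>.mp h2; linear_combination this)
    · exact hD' h2
  have hkey : (b + q*c)*(c + q*b) = a*d*(1+q)^2 := by linear_combination -E
  obtain ⟨x, hx⟩ : ∃ x, x = (b + q*c)/(1 - q^2) := ⟨_, rfl⟩
  obtain ⟨y, hy⟩ : ∃ y, y = (c + q*b)/(1 - q^2) := ⟨_, rfl⟩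
  have hxb : x - q*y = b := by rw [hx, hy]; field_simp; ring
  have hyc : y - q*x = c := by rw [hx, hy]; field_simp; ring
  have hxyad : x * y * (1-q)^2 = a * d := by
    rw [hx, hy]; field_simp
    linear_combination ((1+q)^2 - 4*q) * hkey
  have hxy : x - y = (b - c)/(1+q) := by
    rw [hx, hy]; field_simp; ring
  rcases eq_or_ne x 0 with hx0 | hx0
  · -- x = 0 case
    have had : a * d = 0 := by rw [hx0] at hxyad; linear_combination -hxyad
    have hy0 : y ≠ 0 := by
      intro h
      have h2 : (b - c)/(1+q) = 0 := by rw [← hxy, hx0, h]; ring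
      exact hbc ((div_eq_zero_iff.mp h2).resolve_right h1pq)
    have hpt : (a/(1-q))*(d/((1-q)*y)) = 0 := by
      rw [div_mul_div_comm, had, zero_div]
    rw [hx0] at hxb hyc
    refine congr_aux q M (a/(1-q)) y 1 (d/((1-q)*y)) ?_ ?_ ?_ ?_ ?_
    · rw [ha]; field_simp
    · rw [hb]; linear_combination -hpt - hxb
    · rw [hc]; linear_combination q*hpt - hyc
    · rw [hdd]; field_simp
    · intro h
      exact hy0 (by linear_combination -h + hpt)
  · -- x ≠ 0 case
    have hrs : (d/(1-q)) * (a/((1-q)*x)) = y := by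
      field_simp
      linear_combination -hxyad
    refine congr_aux q M x (d/(1-q)) (a/((1-q)*x)) 1 ?_ ?_ ?_ ?_ ?_
    · rw [ha]; field_simp
    · rw [hb]; linear_combination -hxb + q*hrs
    · rw [hc]; linear_combination -hyc - hrs
    · rw [hdd]; field_simp
    · intro h
      have hxyne : x - y ≠ 0 := by
        rw [hxy]; exact div_ne_zero hbc h1pq
      exact hxyne (by linear_combination h + hrs)
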